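/- Let A = ⊕_{n∈ℕ} A_n be a graded ring. (1) Let M = ⊕_{n∈ℕ} M_n be a graded A-module and S a set of homogeneous elements of M. Then M is generated by S as an A-module if and only if for every n ≥ 0 the A/A_{≥n}-module M/M_{≥n} is generated by the image of S. (2) Let A → B = ⊕_{n∈ℕ} B_n be a morphism of graded rings, J = ⊕_{n∈ℕ} J_n ⊂ B a graded ideal, and S ⊂ B a set of homogeneous elements. Then the A-module B/J is generated by the image of S if and only if the A/A_{≥1}-module B/(J + A_{≥1}B) is generated by the image of S. -/

import Mathlib

/-!
Statement 19 (Lemma `lmGrAB` of T. Saito, *On singular supports in mixed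
characteristic*): generation of graded modules and of quotients of graded rings by
sets of homogeneous elements.

Here a graded ring is a (commutative) ring `A` with an `ℕ`-grading
`𝒜 : ℕ → AddSubgroup A` (`GradedRing 𝒜`), a graded `A`-module is a module `M` with
an `ℕ`-grading `ℳ : ℕ → AddSubgroup M` compatible with the grading of `A`
(`SetLike.GradedSMul 𝒜 ℳ` and `DirectSum.Decomposition ℳ`), `M_{≥n}` is the
`A`-submodule `⊕_{m ≥ n} M_m = span_A (⋃_{m ≥ n} M_m)`, and `A_{≥1}B` is the ideal
of `B` generated by the image of `A_{≥1}`.  Since the `A/A_{≥n}`-module structure of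
`M/M_{≥n}` is induced by its `A`-module structure, generation over `A/A_{≥n}` is
expressed as generation over `A`.
-/

universe u v

open DirectSum

section aux

variable {A : Type u} [CommRing A] (𝒜 : ℕ → AddSubgroup A) [GradedRing 𝒜]
variable {M : Type v} [AddCommGroup M] [Module A M] (ℳ : ℕ → AddSubgroup M)
  [SetLike.GradedSMul 𝒜 ℳ] [DirectSum.Decomposition ℳ]

theorem proj_smul_homog {j : ℕ} {a : A} (ha : a ∈ 𝒜 j) (x : M) (d : ℕ) :
    (DirectSum.decompose ℳ (a • x) d : M)
      = if j ≤ d then a • (DirectSum.decompose ℳ x (d - j) : M) else 0 := by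
  induction x using DirectSum.Decomposition.inductionOn ℳ with
  | zero => simp
  | homogeneous m =>
      obtain ⟨m, hm⟩ := m
      rename_i k
      have hsm : a • m ∈ ℳ (j + k) := SetLike.GradedSMul.smul_mem ha hm
      by_cases h1 : j ≤ d
      · by_cases h2 : d = j + k
        · subst h2
          rw [if_pos h1, DirectSum.decompose_of_mem_same ℳ hsm,
            Nat.add_sub_cancel_left, DirectSum.decompose_of_mem_same ℳ hm]
        · rw [if_pos h1, DirectSum.decompose_of_mem_ne ℳ hsm (fun h => h2 h.symm),
            DirectSum.decompose_of_mem_ne ℳ hm (by omega), smul_zero]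
      · rw [if_neg h1, DirectSum.decompose_of_mem_ne ℳ hsm (by omega)]
  | add m m' hm hm' =>
      rw [smul_add, DirectSum.decompose_add, DirectSum.add_apply, AddSubgroup.coe_add,
        hm, hm']
      split_ifs <;> simp [smul_add]

end aux

section aux2
variable {A : Type u} [CommRing A] (𝒜 : ℕ → AddSubgroup A) [GradedRing 𝒜]
variable {M : Type v} [AddCommGroup M] [Module A M] (ℳ : ℕ → AddSubgroup M)
  [SetLike.GradedSMul 𝒜 ℳ] [DirectSum.Decomposition ℳ]

include 𝒜

theorem proj_smul_sum (s : Finset ℕ) (g : ℕ → A) (hg : ∀ i ∈ s, g i ∈ 𝒜 i) (x : M) (d : ℕ) :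
    (DirectSum.decompose ℳ ((∑ i ∈ s, g i) • x) d : M)
      = ∑ i ∈ s, if i ≤ d then g i • (DirectSum.decompose ℳ x (d - i) : M) else 0 := by
  classical
  induction s using Finset.induction_on with
  | empty => simp
  | insert i s hnot ih =>
      rw [Finset.sum_insert hnot, Finset.sum_insert hnot, add_smul,
        DirectSum.decompose_add, DirectSum.add_apply, AddSubgroup.coe_add,
        proj_smul_homog 𝒜 ℳ (hg i (Finset.mem_insert_self i s)),
        ih (fun i hi => hg i (Finset.mem_insert_of_mem hi))]

/-- Components of elements of the span of a homogeneous set stay in the span. -/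
theorem proj_span_mem {X : Set M} (hX : ∀ s ∈ X, SetLike.IsHomogeneousElem ℳ s)
    {t : M} (ht : t ∈ Submodule.span A X) (d : ℕ) :
    (DirectSum.decompose ℳ t d : M) ∈ Submodule.span A X := by
  classical
  induction ht using Submodule.span_induction generalizing d with
  | mem x hx =>
      obtain ⟨k, hk⟩ := hX x hx
      by_cases h : k = d
      · subst h; rw [DirectSum.decompose_of_mem_same ℳ hk]
        exact Submodule.subset_span hx
      · rw [DirectSum.decompose_of_mem_ne ℳ hk h]; exact zero_mem _
  | zero => simp
  | add x y hx hy ihx ihy =>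
      rw [DirectSum.decompose_add, DirectSum.add_apply, AddSubgroup.coe_add]
      exact add_mem (ihx d) (ihy d)
  | smul a x hx ih =>
      rw [← DirectSum.sum_support_decompose 𝒜 a, proj_smul_sum 𝒜 ℳ _ _
        (fun i _ => SetLike.coe_mem _)]
      refine Submodule.sum_mem _ fun i _ => ?_
      split_ifs
      · exact Submodule.smul_mem _ _ (ih _)
      · exact zero_mem _

/-- Elements of `M_{≥ n}` have vanishing components in degrees `< n`. -/
theorem proj_ge_eq_zero {n : ℕ} {t : M}
    (ht : t ∈ Submodule.span A {m : M | ∃ k, n ≤ k ∧ m ∈ ℳ k}) {d : ℕ} (hd : d < n) :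
    (DirectSum.decompose ℳ t d : M) = 0 := by
  classical
  induction ht using Submodule.span_induction generalizing d with
  | mem x hx =>
      obtain ⟨k, hk, hmem⟩ := hx
      exact DirectSum.decompose_of_mem_ne ℳ hmem (by omega)
  | zero => simp
  | add x y hx hy ihx ihy =>
      rw [DirectSum.decompose_add, DirectSum.add_apply, AddSubgroup.coe_add,
        ihx hd, ihy hd, add_zero]
  | smul a x hx ih =>
      rw [← DirectSum.sum_support_decompose 𝒜 a, proj_smul_sum 𝒜 ℳ _ _
        (fun i _ => SetLike.coe_mem _)]
      refine Finset.sum_eq_zero fun i _ => ?_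
      split_ifs
      · rw [ih (by omega), smul_zero]
      · rfl

end aux2

section part1
variable {A : Type u} [CommRing A] (𝒜 : ℕ → AddSubgroup A) [GradedRing 𝒜]
variable {M : Type v} [AddCommGroup M] [Module A M] (ℳ : ℕ → AddSubgroup M)
  [SetLike.GradedSMul 𝒜 ℳ] [DirectSum.Decomposition ℳ]

include 𝒜

theorem part1_main (S : Set M) (hS : ∀ s ∈ S, SetLike.IsHomogeneousElem ℳ s) :
    Submodule.span A S = ⊤ ↔
      ∀ n : ℕ,
        Submodule.span A
          ((Submodule.span A {m : M | ∃ k, n ≤ k ∧ m ∈ ℳ k}).mkQ '' S) = ⊤ := by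
  constructor
  · intro h n
    rw [Submodule.span_image, h, Submodule.map_top, Submodule.range_mkQ]
  · intro h
    rw [eq_top_iff]
    rintro m -
    induction m using DirectSum.Decomposition.inductionOn ℳ with
    | zero => exact zero_mem _
    | homogeneous m =>
        obtain ⟨m, hm⟩ := m
        rename_i k
        have hk := h (k + 1)
        rw [Submodule.span_image, Submodule.map_mkQ_eq_top] at hk
        have : m ∈ Submodule.span A {m : M | ∃ j, k + 1 ≤ j ∧ m ∈ ℳ j} ⊔
            Submodule.span A S := by rw [hk]; trivial
        obtain ⟨t, ht, s, hs, rfl⟩ := Submodule.mem_sup.mp this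
        have hproj : ((DirectSum.decompose ℳ (t + s) k : M)) = t + s :=
          DirectSum.decompose_of_mem_same ℳ hm
        rw [DirectSum.decompose_add, DirectSum.add_apply, AddSubgroup.coe_add,
          proj_ge_eq_zero 𝒜 ℳ ht (by omega), zero_add] at hproj
        show t + s ∈ Submodule.span A S
        rw [← hproj]
        exact proj_span_mem 𝒜 ℳ hS hs k
    | add m m' hm hm' => exact add_mem hm hm'

end part1

section quot
variable {A : Type u} [CommRing A] {B : Type v} [CommRing B] [Algebra A B]

theorem quot_span_top_iff (K : Ideal B) (S : Set B) :
    Submodule.span A ((Ideal.Quotient.mk K) '' S) = ⊤ ↔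
      Submodule.span A S ⊔ K.restrictScalars A = ⊤ := by
  let f : B →ₗ[A] B ⧸ K := (Ideal.Quotient.mkₐ A K).toLinearMap
  have hker : LinearMap.ker f = K.restrictScalars A := by
    ext x
    simp [f, LinearMap.mem_ker, Ideal.Quotient.eq_zero_iff_mem]
  have himg : (Ideal.Quotient.mk K) '' S = f '' S := rfl
  rw [himg, Submodule.span_image]
  constructor
  · intro h
    have h2 := Submodule.comap_map_eq f (Submodule.span A S)
    rw [h, Submodule.comap_top, hker] at h2
    exact h2.symm
  · intro h
    have h2 : Submodule.map f (Submodule.span A S ⊔ K.restrictScalars A) = ⊤ := by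
      rw [h, Submodule.map_top, LinearMap.range_eq_top]
      exact Ideal.Quotient.mk_surjective
    have hb : Submodule.map f (K.restrictScalars A) = ⊥ := by
      rw [← hker]
      ext x
      constructor
      · rintro ⟨y, hy, rfl⟩; simpa using hy
      · rintro h; rw [Submodule.mem_bot] at h; subst h
        exact ⟨0, zero_mem _, map_zero f⟩
    rwa [Submodule.map_sup, hb, sup_bot_eq] at h2

end quot

section part2
variable {A : Type u} [CommRing A] (𝒜 : ℕ → AddSubgroup A) [GradedRing 𝒜]
variable {B : Type v} [CommRing B] [Algebra A B] (ℬ : ℕ → AddSubgroup B) [GradedRing ℬ]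

theorem part2_main (hcomp : ∀ n : ℕ, ∀ a ∈ 𝒜 n, algebraMap A B a ∈ ℬ n)
    (J : Ideal B) (hJ : J.IsHomogeneous ℬ) (S : Set B)
    (hS : ∀ s ∈ S, SetLike.IsHomogeneousElem ℬ s) :
    Submodule.span A ((Ideal.Quotient.mk J) '' S) = ⊤ ↔
      Submodule.span A ((Ideal.Quotient.mk (J ⊔ Ideal.span
        ((algebraMap A B) '' {a : A | ∃ k, 1 ≤ k ∧ a ∈ 𝒜 k}))) '' S) = ⊤ := by
  classical
  haveI : SetLike.GradedSMul 𝒜 ℬ :=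
    ⟨fun {i j} {a b} ha hb => by
      rw [Algebra.smul_def]
      exact SetLike.mul_mem_graded (hcomp i a ha) hb⟩
  set I : Ideal B := Ideal.span ((algebraMap A B) '' {a : A | ∃ k, 1 ≤ k ∧ a ∈ 𝒜 k}) with hI
  rw [quot_span_top_iff, quot_span_top_iff]
  have hsupJI : (J ⊔ I).restrictScalars A
      = J.restrictScalars A ⊔ I.restrictScalars A := by
    ext x
    simp only [Submodule.restrictScalars_mem, Submodule.mem_sup]
  rw [hsupJI]
  constructor
  · intro h
    rw [← sup_assoc, h, top_sup_eq]
  · intro h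
    have hIproj : ∀ x ∈ I, ∀ d : ℕ,
        (DirectSum.decompose ℬ x d : B) ∈
          Submodule.span A (⋃ e ∈ Set.Iio d, (ℬ e : Set B)) := by
      intro x hx
      induction hx using Submodule.span_induction with
      | mem x hx =>
          intro d
          obtain ⟨a, ⟨k, hk1, hak⟩, rfl⟩ := hx
          have hxk : algebraMap A B a ∈ ℬ k := hcomp k a hak
          by_cases hkd : k = d
          · subst hkd
            rw [DirectSum.decompose_of_mem_same ℬ hxk]
            have h1 : (1 : B) ∈ ⋃ e ∈ Set.Iio k, (ℬ e : Set B) :=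
              Set.mem_biUnion (show (0:ℕ) ∈ Set.Iio k from hk1) (SetLike.one_mem_graded ℬ)
            have h2 := Submodule.smul_mem
              (Submodule.span A (⋃ e ∈ Set.Iio k, (ℬ e : Set B))) a
              (Submodule.subset_span h1)
            rwa [Algebra.smul_def, mul_one] at h2
          · rw [DirectSum.decompose_of_mem_ne ℬ hxk hkd]; exact zero_mem _
      | zero => intro d; simp
      | add x y hx hy ihx ihy =>
          intro d
          rw [DirectSum.decompose_add, DirectSum.add_apply, AddSubgroup.coe_add]
          exact add_mem (ihx d) (ihy d)
      | smul b x hx ih =>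
          intro d
          rw [smul_eq_mul, ← DirectSum.sum_support_decompose ℬ b, Finset.sum_mul,
            DirectSum.decompose_sum, DFinsupp.finset_sum_apply,
            AddSubmonoidClass.coe_finset_sum]
          refine Submodule.sum_mem _ fun i _ => ?_
          rw [DirectSum.coe_decompose_mul_of_left_mem ℬ d (SetLike.coe_mem _)]
          split_ifs with hid
          · have key : Submodule.span A (⋃ e ∈ Set.Iio (d - i), (ℬ e : Set B)) ≤
                Submodule.comap (LinearMap.mulLeft A
                    ((DirectSum.decompose ℬ b i : B)))
                  (Submodule.span A (⋃ e ∈ Set.Iio d, (ℬ e : Set B))) := by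
              rw [Submodule.span_le]
              rintro y hy
              simp only [Set.mem_iUnion, Set.mem_Iio, exists_prop] at hy
              obtain ⟨e, he, hye⟩ := hy
              refine Submodule.subset_span ?_
              refine Set.mem_biUnion (show i + e ∈ Set.Iio d by
                simp only [Set.mem_Iio]; omega) ?_
              exact SetLike.mul_mem_graded (SetLike.coe_mem _) hye
            exact key (ih (d - i))
          · exact zero_mem _
    set P := Submodule.span A S ⊔ Submodule.restrictScalars A J with hP
    have hmain : ∀ d : ℕ, ∀ b ∈ ℬ d, b ∈ P := by
      intro d
      induction d using Nat.strong_induction_on with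
      | _ d IH =>
        intro b hb
        have hbmem : b ∈ P ⊔ Submodule.restrictScalars A I := by
          rw [hP, sup_assoc, h]; trivial
        obtain ⟨p, hp, i, hi, rfl⟩ := Submodule.mem_sup.mp hbmem
        have hproj : (DirectSum.decompose ℬ (p + i) d : B) = p + i :=
          DirectSum.decompose_of_mem_same ℬ hb
        rw [DirectSum.decompose_add, DirectSum.add_apply, AddSubgroup.coe_add] at hproj
        have hpP : (DirectSum.decompose ℬ p d : B) ∈ P := by
          obtain ⟨s, hs, j, hj, rfl⟩ := Submodule.mem_sup.mp hp
          rw [DirectSum.decompose_add, DirectSum.add_apply, AddSubgroup.coe_add]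
          exact add_mem (Submodule.mem_sup_left (proj_span_mem 𝒜 ℬ hS hs d))
            (Submodule.mem_sup_right (hJ d hj))
        have hiP : (DirectSum.decompose ℬ i d : B) ∈ P := by
          refine Submodule.span_le.mpr ?_ (hIproj i hi d)
          rintro y hy
          simp only [Set.mem_iUnion, Set.mem_Iio, exists_prop] at hy
          obtain ⟨e, he, hye⟩ := hy
          exact IH e he y hye
        rw [← hproj]
        exact add_mem hpP hiP
    have hPtopP : P = ⊤ := by
      rw [eq_top_iff]
      rintro b -
      induction b using DirectSum.Decomposition.inductionOn ℬ with
      | zero => exact zero_mem _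
      | homogeneous m => exact hmain _ _ m.2
      | add x y hx hy => exact add_mem hx hy
    exact hPtopP

end part2

/-- Lemma `lmGrAB`.  Let `A = ⊕_{n ∈ ℕ} A_n` be a graded ring.
(1) Let `M = ⊕_{n ∈ ℕ} M_n` be a graded `A`-module and `S` a set of homogeneous
    elements of `M`.  Then `M` is generated by `S` as an `A`-module if and only if
    for every `n ≥ 0` the `A/A_{≥n}`-module `M/M_{≥n}` is generated by the image of
    `S`.
(2) Let `A → B = ⊕_{n ∈ ℕ} B_n` be a morphism of graded rings,
    `J = ⊕_{n ∈ ℕ} J_n ⊆ B` a graded ideal, and `S ⊆ B` a set of homogeneous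
    elements.  Then the `A`-module `B/J` is generated by the image of `S` if and
    only if the `A/A_{≥1}`-module `B/(J + A_{≥1}B)` is generated by the image of
    `S`. -/
theorem graded_generation_criterion
    {A : Type u} [CommRing A] (𝒜 : ℕ → AddSubgroup A) [GradedRing 𝒜] :
    (∀ (M : Type v) [AddCommGroup M] [Module A M] (ℳ : ℕ → AddSubgroup M)
        [SetLike.GradedSMul 𝒜 ℳ] [DirectSum.Decomposition ℳ] (S : Set M),
        (∀ s ∈ S, SetLike.IsHomogeneousElem ℳ s) →
        (Submodule.span A S = ⊤ ↔
          ∀ n : ℕ,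
            Submodule.span A
              ((Submodule.span A {m : M | ∃ k, n ≤ k ∧ m ∈ ℳ k}).mkQ '' S) = ⊤)) ∧
      (∀ (B : Type v) [CommRing B] [Algebra A B] (ℬ : ℕ → AddSubgroup B)
          [GradedRing ℬ],
          (∀ n : ℕ, ∀ a ∈ 𝒜 n, algebraMap A B a ∈ ℬ n) →
          ∀ J : Ideal B, J.IsHomogeneous ℬ →
            ∀ S : Set B, (∀ s ∈ S, SetLike.IsHomogeneousElem ℬ s) →
              (Submodule.span A ((Ideal.Quotient.mk J) '' S) = ⊤ ↔
                Submodule.span A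
                  ((Ideal.Quotient.mk (J ⊔ Ideal.span
                    ((algebraMap A B) '' {a : A | ∃ k, 1 ≤ k ∧ a ∈ 𝒜 k}))) ''
                      S) = ⊤)) := by
  constructor
  · intro M _ _ ℳ _ _ S hS
    exact part1_main 𝒜 ℳ S hS
  · intro B _ _ ℬ _ hcomp J hJ S hS
    exact part2_main 𝒜 ℬ hcomp J hJ S hS
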